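/- Let I ⊆ M = ⟨x_1,...,x_n⟩ be an ideal, let Z be a set of s distinct indeterminates, and suppose I contains a coherently Z-separating tuple (f_1,...,f_s). If s = dim_K(Lin_M(I)), then edim(P/I) = n - s and the Z-separating re-embedding Φ: P/I → P̂/(I ∩ P̂) is an optimal re-embedding. -/

import Mathlib

open MvPolynomial

/-- A term ordering on the monomials of `K[x_1,...,x_n]`: a linear order on
exponent vectors compatible with addition and with `1` as smallest term. -/
structure TermOrder (n : ℕ) where
  le : (Fin n →₀ ℕ) → (Fin n →₀ ℕ) → Prop
  le_refl : ∀ m, le m m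
  le_trans : ∀ a b c, le a b → le b c → le a c
  le_antisymm : ∀ a b, le a b → le b a → a = b
  le_total : ∀ a b, le a b ∨ le b a
  add_le_add : ∀ a b c, le a b → le (a + c) (b + c)
  zero_le : ∀ m, le 0 m

variable {K : Type*} [Field K] {n s : ℕ}

/-- `m` is the `σ`-leading term of `f`. -/
def TermOrder.IsLeadingTerm (σ : TermOrder n) (f : MvPolynomial (Fin n) K)
    (m : Fin n →₀ ℕ) : Prop :=
  m ∈ f.support ∧ ∀ m' ∈ f.support, σ.le m' m

/-- `G` is a `σ`-Gröbner basis of the set `S` (typically an ideal or an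
elimination ideal): `G ⊆ S` and the leading term of every nonzero element of `S`
is divisible by the leading term of some element of `G`. -/
def IsGBOn (σ : TermOrder n) (S G : Set (MvPolynomial (Fin n) K)) : Prop :=
  G ⊆ S ∧ ∀ f ∈ S, f ≠ 0 → ∃ g ∈ G, ∃ mg mf, σ.IsLeadingTerm g mg ∧
    σ.IsLeadingTerm f mf ∧ mg ≤ mf

/-- `G` is the reduced `σ`-Gröbner basis of `S`: a monic, fully interreduced
`σ`-Gröbner basis. -/
def IsReducedGBOn (σ : TermOrder n) (S G : Set (MvPolynomial (Fin n) K)) : Prop :=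
  IsGBOn σ S G ∧
  (∀ g ∈ G, ∃ m, σ.IsLeadingTerm g m ∧ MvPolynomial.coeff m g = 1) ∧
  (∀ g ∈ G, ∀ m ∈ g.support, ∀ g' ∈ G, ∀ m', σ.IsLeadingTerm g' m' → m' ≤ m →
    g' = g ∧ m' = m)

/-- The indeterminate `z` divides some term in the support of `f`. -/
def Occurs (z : Fin n) (f : MvPolynomial (Fin n) K) : Prop :=
  ∃ m ∈ f.support, m z ≠ 0

/-- `tail_z(f) = z - (1/c) f`, where `c` is the coefficient of `z` in `f`. -/
noncomputable def tailTo (f : MvPolynomial (Fin n) K) (z : Fin n) :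
    MvPolynomial (Fin n) K :=
  X z - (MvPolynomial.coeff (Finsupp.single z 1) f)⁻¹ • f

/-- `f` is `z`-separating: the coefficient of `z` in `f` is nonzero and `z`
divides no term in the support of `tail_z(f)`. -/
def IsSeparating (f : MvPolynomial (Fin n) K) (z : Fin n) : Prop :=
  MvPolynomial.coeff (Finsupp.single z 1) f ≠ 0 ∧ ¬ Occurs z (tailTo f z)

/-- `(f_1,...,f_s)` is coherently `Z`-separating for `Z = {z_1,...,z_s}`. -/
def CoherentlySeparating (z : Fin s → Fin n) (f : Fin s → MvPolynomial (Fin n) K) : Prop :=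
  Function.Injective z ∧ (∀ i, f i ≠ 0 ∧ IsSeparating (f i) (z i)) ∧
  ∀ i j, j ≠ i → ¬ Occurs (z i) (f j)

/-- The `M`-linear part of `f` for `M = ⟨x_1-a_1,...,x_n-a_n⟩`. -/
noncomputable def linPart (a : Fin n → K) (f : MvPolynomial (Fin n) K) :
    MvPolynomial (Fin n) K :=
  (MvPolynomial.aeval fun i => X i - C (a i))
    (MvPolynomial.homogeneousComponent 1 ((MvPolynomial.aeval fun i => X i + C (a i)) f))

/-- The `M`-linear part of an ideal `I`: the `K`-span of `{Lin_M(f) : f ∈ I}`. -/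
noncomputable def linSpace (a : Fin n → K) (I : Ideal (MvPolynomial (Fin n) K)) :
    Submodule K (MvPolynomial (Fin n) K) :=
  Submodule.span K (linPart a '' (I : Set (MvPolynomial (Fin n) K)))

/-- The linear maximal ideal `M = ⟨x_1-a_1,...,x_n-a_n⟩`. -/
noncomputable def linMaxIdeal (a : Fin n → K) : Ideal (MvPolynomial (Fin n) K) :=
  Ideal.span (Set.range fun i => X i - C (a i))

/-- `M_1`, the `K`-vector space spanned by `x_1-a_1,...,x_n-a_n`. -/
noncomputable def linForms (a : Fin n → K) : Submodule K (MvPolynomial (Fin n) K) :=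
  Submodule.span K (Set.range fun i => X i - C (a i))

/-- The elimination ideal `I ∩ K[X∖Z]`, viewed as the set of polynomials of `I`
in which no indeterminate of `Z` occurs. -/
def elimSet (z : Fin s → Fin n) (I : Ideal (MvPolynomial (Fin n) K)) :
    Set (MvPolynomial (Fin n) K) :=
  {p | p ∈ I ∧ ∀ i, ¬ Occurs (z i) p}

/-- `r` is the normal form of `p` with respect to (the reduced Gröbner basis of)
`S`: `p - r ∈ S` and no term of `r` is divisible by a leading term of `S`. -/
def IsNormalFormOn (σ : TermOrder n) (S : Set (MvPolynomial (Fin n) K))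
    (p r : MvPolynomial (Fin n) K) : Prop :=
  p - r ∈ S ∧ ∀ f ∈ S, f ≠ 0 → ∀ mf m, σ.IsLeadingTerm f mf → m ∈ r.support → ¬ mf ≤ m

/-- `σ` is a `Z`-separating term ordering for `I`. -/
def IsZSepOrder (σ : TermOrder n) (z : Fin s → Fin n)
    (I : Ideal (MvPolynomial (Fin n) K)) : Prop :=
  ∃ p : Fin s → MvPolynomial (Fin n) K,
    (∀ i, p i ∈ I ∧ p i ≠ 0 ∧ σ.IsLeadingTerm (p i) (Finsupp.single (z i) 1)) ∧
    CoherentlySeparating z p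

open Classical in
/-- The substitution `x_i ↦ x_i` for `x_i ∉ Z` and `z_j ↦ tail_{z_j}(f_j)`. -/
noncomputable def subMap (z : Fin s → Fin n) (f : Fin s → MvPolynomial (Fin n) K)
    (i : Fin n) : MvPolynomial (Fin n) K :=
  if h : ∃ j, z j = i then tailTo (f h.choose) (z h.choose) else X i

open Classical in
/-- The projection of `P` onto `P̂ = K[X∖Z]`. -/
noncomputable def killZ (z : Fin s → Fin n) :
    MvPolynomial (Fin n) K →ₐ[K] MvPolynomial {i : Fin n // ¬ ∃ j, z j = i} K :=
  MvPolynomial.aeval fun i => if h : ∃ j, z j = i then 0 else X ⟨i, h⟩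

/-- The elimination ideal `I ∩ P̂` as an ideal of `P̂ = K[X∖Z]`. -/
noncomputable def elimIdeal (z : Fin s → Fin n) (I : Ideal (MvPolynomial (Fin n) K)) :
    Ideal (MvPolynomial {i : Fin n // ¬ ∃ j, z j = i} K) :=
  Ideal.comap (MvPolynomial.rename
    (Subtype.val : {i : Fin n // ¬ ∃ j, z j = i} → Fin n)).toRingHom I

/-- The composition `ψ : P → P̂ → P̂/(I ∩ P̂)` of the substitution
`z_j ↦ tail_{z_j}(f_j)` with the canonical projection. -/
noncomputable def reembedHom (z : Fin s → Fin n) (f : Fin s → MvPolynomial (Fin n) K)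
    (I : Ideal (MvPolynomial (Fin n) K)) :
    MvPolynomial (Fin n) K →+*
      (MvPolynomial {i : Fin n // ¬ ∃ j, z j = i} K ⧸ elimIdeal z I) :=
  (Ideal.Quotient.mk (elimIdeal z I)).comp
    (((killZ z).comp (MvPolynomial.aeval (subMap z f))).toRingHom)

/-- The cotangent space `m/m²` as a `K`-vector space. -/
abbrev cotSpace (K : Type*) [Field K] {R : Type*} [CommRing R] [Algebra K R]
    (m : Ideal R) :=
  (m.restrictScalars K) ⧸
    Submodule.comap (Submodule.subtype (m.restrictScalars K)) ((m ^ 2).restrictScalars K)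

/-- The embedding dimension of an affine `K`-algebra `R`: the minimal number `m`
of indeterminates of a presentation `R ≅ K[y_1,...,y_m]/I'`. -/
noncomputable def edim (K : Type*) [Field K] (R : Type*) [CommRing R] [Algebra K R] : ℕ :=
  sInf {m | ∃ I' : Ideal (MvPolynomial (Fin m) K),
    Nonempty (R ≃ₐ[K] (MvPolynomial (Fin m) K ⧸ I'))}

/-- A marked reduced Gröbner basis of `I`: a reduced `σ`-Gröbner basis together
with the marking of the `σ`-leading term of each element. -/
def IsMarkedReducedGB (I : Ideal (MvPolynomial (Fin n) K))
    (G : Set ((Fin n →₀ ℕ) × MvPolynomial (Fin n) K)) : Prop :=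
  ∃ σ : TermOrder n, IsReducedGBOn σ (I : Set (MvPolynomial (Fin n) K)) (Prod.snd '' G) ∧
    ∀ p ∈ G, σ.IsLeadingTerm p.2 p.1


section AuxA
variable {K : Type*} [Field K] {n s m : ℕ}


/-- linear coefficient extraction -/
noncomputable def linCoeff : MvPolynomial (Fin n) K →ₗ[K] (Fin n → K) where
  toFun p := fun i => coeff (Finsupp.single i 1) p
  map_add' p q := by funext i; simp [coeff_add]
  map_smul' c p := by funext i; simp [coeff_smul]

@[simp] lemma linCoeff_C (c : K) : linCoeff (C c : MvPolynomial (Fin n) K) = 0 := by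
  funext i
  simp only [linCoeff, LinearMap.coe_mk, AddHom.coe_mk, coeff_C, Pi.zero_apply]
  rw [if_neg fun h => (one_ne_zero : (1:ℕ) ≠ 0) (Finsupp.single_eq_zero.mp h.symm)]

@[simp] lemma linCoeff_X (i : Fin n) : linCoeff (X i : MvPolynomial (Fin n) K) = Pi.single i 1 := by
  funext j
  simp only [linCoeff, LinearMap.coe_mk, AddHom.coe_mk, coeff_X']
  rcases eq_or_ne i j with rfl | hij
  · rw [if_pos rfl, Pi.single_eq_same]
  · rw [if_neg, Pi.single_eq_of_ne (Ne.symm hij)]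
    rw [Finsupp.single_left_inj one_ne_zero]
    exact hij

lemma degree_single (i : Fin n) : (Finsupp.single i 1 : Fin n →₀ ℕ).degree = 1 := by
  rw [Finsupp.degree_apply, Finsupp.support_single_ne_zero _ one_ne_zero, Finset.sum_singleton,
    Finsupp.single_eq_same]

lemma finsupp_degree_one {d : Fin n →₀ ℕ} (hd : d.degree = 1) : ∃ i, d = Finsupp.single i 1 := by
  have hne : d.support.Nonempty := by
    rw [Finsupp.support_nonempty_iff]
    intro h
    rw [h] at hd; simp [Finsupp.degree] at hd
  obtain ⟨i, hi⟩ := hne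
  have hi' : d i ≠ 0 := Finsupp.mem_support_iff.mp hi
  have hle : d i ≤ 1 := hd ▸ Finset.single_le_sum (f := fun j => d j) (fun _ _ => Nat.zero_le _) hi
  have hdi : d i = 1 := le_antisymm hle (Nat.one_le_iff_ne_zero.mpr hi')
  refine ⟨i, Finsupp.eq_single_iff.mpr ⟨?_, hdi⟩⟩
  intro j hj
  simp only [Finset.mem_singleton]
  by_contra hji
  have : 2 ≤ d.degree := by
    have h2 : ({i, j} : Finset (Fin n)) ⊆ d.support := by
      intro x hx
      simp only [Finset.mem_insert, Finset.mem_singleton] at hx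
      rcases hx with rfl | rfl <;> assumption
    calc 2 = d i + 1 := by omega
    _ ≤ d i + d j := by
        have := Finsupp.mem_support_iff.mp hj; omega
    _ = ∑ x ∈ ({i, j} : Finset (Fin n)), d x := by
        rw [Finset.sum_insert (by simpa using (Ne.symm hji : i ≠ j)), Finset.sum_singleton]
    _ ≤ d.degree := Finset.sum_le_sum_of_subset h2
  omega

lemma linCoeff_homogeneousComponent (f : MvPolynomial (Fin n) K) :
    linCoeff (homogeneousComponent 1 f) = linCoeff f := by
  funext i
  simp [linCoeff, coeff_homogeneousComponent, degree_single]

end AuxA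


section AuxB
variable {K : Type*} [Field K] {n s : ℕ}

lemma linPart_zero (f : MvPolynomial (Fin n) K) :
    linPart (0 : Fin n → K) f = homogeneousComponent 1 f := by
  simp [linPart]

lemma linCoeff_linPart (f : MvPolynomial (Fin n) K) :
    linCoeff (linPart (0 : Fin n → K) f) = linCoeff f := by
  rw [linPart_zero, linCoeff_homogeneousComponent]

lemma linCoeff_mem_W {I : Ideal (MvPolynomial (Fin n) K)} {f : MvPolynomial (Fin n) K}
    (hf : f ∈ I) : linCoeff f ∈ (linSpace (0 : Fin n → K) I).map linCoeff :=
  ⟨linPart 0 f, Submodule.subset_span ⟨f, hf, rfl⟩, linCoeff_linPart f⟩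

lemma linSpace_le_homog (I : Ideal (MvPolynomial (Fin n) K)) :
    linSpace (0 : Fin n → K) I ≤ homogeneousSubmodule (Fin n) K 1 := by
  rw [linSpace, Submodule.span_le]
  rintro g ⟨f, _, rfl⟩
  rw [SetLike.mem_coe, mem_homogeneousSubmodule, linPart_zero]
  exact homogeneousComponent_isHomogeneous 1 f

lemma linCoeff_injOn {I : Ideal (MvPolynomial (Fin n) K)} {g : MvPolynomial (Fin n) K}
    (hg : g ∈ linSpace (0 : Fin n → K) I) (h0 : linCoeff g = 0) : g = 0 := by
  have hh : g.IsHomogeneous 1 := (mem_homogeneousSubmodule _ _).mp (linSpace_le_homog I hg)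
  ext d
  rw [coeff_zero]
  by_contra hc
  have hd : d.degree = 1 := by
    have := hh hc
    rwa [Pi.one_def, ← Finsupp.degree_eq_weight_one] at this
  obtain ⟨i, rfl⟩ := finsupp_degree_one hd
  exact hc (congrFun h0 i)

lemma finrank_map_linCoeff (I : Ideal (MvPolynomial (Fin n) K)) :
    Module.finrank K ((linSpace (0 : Fin n → K) I).map linCoeff) =
      Module.finrank K (linSpace (0 : Fin n → K) I) := by
  set L := linSpace (0 : Fin n → K) I
  set l' : L →ₗ[K] (Fin n → K) := linCoeff.comp L.subtype with hl'
  have hker : LinearMap.ker l' = ⊥ := by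
    apply (Submodule.eq_bot_iff _).mpr
    rintro ⟨x, hx⟩ hmem
    have : linCoeff x = 0 := hmem
    exact Subtype.ext (linCoeff_injOn hx this)
  have hrange : LinearMap.range l' = L.map linCoeff := by
    rw [hl', LinearMap.range_comp, Submodule.range_subtype]
  rw [← hrange]
  exact LinearMap.finrank_range_of_inj (LinearMap.ker_eq_bot.mp hker)

lemma linMaxIdeal_zero : linMaxIdeal (0 : Fin n → K) = Ideal.span (Set.range X) := by
  rw [linMaxIdeal]
  congr 1
  exact congrArg Set.range (funext fun i => by simp)

lemma constantCoeff_eq_coeff_zero (p : MvPolynomial (Fin n) K) :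
    constantCoeff p = coeff 0 p := rfl

lemma constantCoeff_of_mem_M {p : MvPolynomial (Fin n) K}
    (hp : p ∈ linMaxIdeal (0 : Fin n → K)) : constantCoeff p = 0 := by
  rw [linMaxIdeal_zero, ← Set.image_univ, mem_ideal_span_X_image] at hp
  rw [constantCoeff_eq_coeff_zero]
  by_contra hc
  obtain ⟨i, _, hi⟩ := hp 0 (mem_support_iff.mpr hc)
  exact hi rfl

lemma mem_M_of_constantCoeff {p : MvPolynomial (Fin n) K}
    (hp : constantCoeff p = 0) : p ∈ linMaxIdeal (0 : Fin n → K) := by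
  rw [linMaxIdeal_zero, ← Set.image_univ, mem_ideal_span_X_image]
  intro m hm
  have hm0 : m ≠ 0 := by
    rintro rfl
    exact mem_support_iff.mp hm (constantCoeff_eq_coeff_zero p ▸ hp)
  obtain ⟨a, ha⟩ := Finsupp.ne_iff.mp hm0
  exact ⟨a, Set.mem_univ a, by simpa using ha⟩

lemma add_eq_single_cases {u v : Fin n →₀ ℕ} {i : Fin n}
    (huv : u + v = Finsupp.single i 1) : u = 0 ∨ v = 0 := by
  by_contra hc
  push_neg at hc
  obtain ⟨a, ha⟩ := Finsupp.ne_iff.mp hc.1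
  obtain ⟨b, hb⟩ := Finsupp.ne_iff.mp hc.2
  simp only [Finsupp.coe_zero, Pi.zero_apply] at ha hb
  have happ : ∀ c, u c + v c = (Finsupp.single i 1) c := fun c => by
    rw [← huv]; simp
  have hai : a = i := by
    by_contra hai
    have := happ a
    rw [Finsupp.single_eq_of_ne' (fun h => hai h.symm)] at this
    omega
  have hbi : b = i := by
    by_contra hbi
    have := happ b
    rw [Finsupp.single_eq_of_ne' (fun h => hbi h.symm)] at this
    omega
  rw [hai] at ha
  rw [hbi] at hb
  have h1 := happ i
  rw [Finsupp.single_eq_same] at h1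
  omega

lemma linCoeff_mul_zero {p q : MvPolynomial (Fin n) K}
    (hp : constantCoeff p = 0) (hq : constantCoeff q = 0) : linCoeff (p * q) = 0 := by
  funext i
  show coeff (Finsupp.single i 1) (p * q) = 0
  classical
  rw [coeff_mul]
  apply Finset.sum_eq_zero
  rintro ⟨u, v⟩ huv
  rw [Finset.HasAntidiagonal.mem_antidiagonal] at huv
  rcases add_eq_single_cases huv with rfl | rfl
  · have h0 : coeff (0 : Fin n →₀ ℕ) p = 0 := hp
    simp only [h0, zero_mul]
  · have h0 : coeff (0 : Fin n →₀ ℕ) q = 0 := hq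
    simp only [h0, mul_zero]

lemma linCoeff_M_sq {p : MvPolynomial (Fin n) K}
    (hp : p ∈ (linMaxIdeal (0 : Fin n → K)) ^ 2) : linCoeff p = 0 := by
  rw [pow_two] at hp
  refine Submodule.mul_induction_on hp
    (fun a ha b hb => linCoeff_mul_zero (constantCoeff_of_mem_M ha) (constantCoeff_of_mem_M hb))
    (fun x y hx hy => by rw [map_add, hx, hy, add_zero])

end AuxB


section AuxC
variable {K : Type*} [Field K] {n s : ℕ}

/-- The substitution `P →ₐ P̂`. -/
noncomputable def psiMap (z : Fin s → Fin n) (f : Fin s → MvPolynomial (Fin n) K) :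
    MvPolynomial (Fin n) K →ₐ[K] MvPolynomial {i : Fin n // ¬ ∃ j, z j = i} K :=
  (killZ z).comp (MvPolynomial.aeval (subMap z f))

lemma killZ_X_not (z : Fin s → Fin n) (i : Fin n) (h : ¬ ∃ j, z j = i) :
    killZ z (X i : MvPolynomial (Fin n) K) = X ⟨i, h⟩ := by
  classical
  rw [killZ, aeval_X, dif_neg h]

lemma killZ_rename (z : Fin s → Fin n) (q : MvPolynomial {i : Fin n // ¬ ∃ j, z j = i} K) :
    killZ z (rename Subtype.val q) = q := by
  have hcomp : (killZ z).comp (rename (Subtype.val : {i : Fin n // ¬ ∃ j, z j = i} → Fin n)) =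
      AlgHom.id K _ := by
    apply algHom_ext
    intro x
    rw [AlgHom.comp_apply, rename_X, AlgHom.id_apply, killZ_X_not z x.val x.prop]
  calc killZ z (rename Subtype.val q) = ((killZ z).comp (rename Subtype.val)) q := rfl
  _ = q := by rw [hcomp]; rfl

lemma psiMap_rename (z : Fin s → Fin n) (f : Fin s → MvPolynomial (Fin n) K)
    (q : MvPolynomial {i : Fin n // ¬ ∃ j, z j = i} K) :
    psiMap z f (rename Subtype.val q) = q := by
  have hq : (aeval (subMap z f)) (rename Subtype.val q) = rename Subtype.val q := by
    have hcomp : (aeval (subMap z f)).comp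
        (rename (Subtype.val : {i : Fin n // ¬ ∃ j, z j = i} → Fin n)) = rename Subtype.val := by
      apply algHom_ext
      intro x
      classical
      rw [AlgHom.comp_apply, rename_X, aeval_X, subMap, dif_neg x.prop]
    calc (aeval (subMap z f)) (rename Subtype.val q)
        = ((aeval (subMap z f)).comp (rename Subtype.val)) q := rfl
    _ = rename Subtype.val q := by rw [hcomp]
  rw [psiMap, AlgHom.comp_apply, hq, killZ_rename]

/-- The composite `P → P̂ → P`. -/
noncomputable def thetaMap (z : Fin s → Fin n) (f : Fin s → MvPolynomial (Fin n) K) :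
    MvPolynomial (Fin n) K →ₐ[K] MvPolynomial (Fin n) K :=
  (rename Subtype.val).comp (psiMap z f)

lemma no_occurs_killZ (z : Fin s → Fin n) (g : MvPolynomial (Fin n) K)
    (hg : ∀ i, (∃ j, z j = i) → ¬ Occurs i g) :
    rename Subtype.val (killZ z g) = g := by
  have hvars : ↑g.vars ⊆ Set.range (Subtype.val : {i : Fin n // ¬ ∃ j, z j = i} → Fin n) := by
    intro i hi
    have hocc : ¬ ∃ j, z j = i := by
      intro hex
      obtain ⟨d, hd, hid⟩ := (mem_vars i).mp hi
      exact hg i hex ⟨d, hd, Finsupp.mem_support_iff.mp hid⟩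
    exact ⟨⟨i, hocc⟩, rfl⟩
  obtain ⟨q, rfl⟩ := exists_rename_eq_of_vars_subset_range g Subtype.val
    Subtype.val_injective hvars
  rw [killZ_rename]

lemma tail_no_Z {z : Fin s → Fin n} {f : Fin s → MvPolynomial (Fin n) K}
    (hcs : CoherentlySeparating z f) (j : Fin s) :
    ∀ i, (∃ k, z k = i) → ¬ Occurs i (tailTo (f j) (z j)) := by
  rintro i ⟨k, rfl⟩ hocc
  by_cases hk : k = j
  · subst hk
    exact (hcs.2.1 k).2.2 hocc
  · obtain ⟨d, hd, hdz⟩ := hocc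
    rw [tailTo] at hd
    rcases Finset.mem_union.mp (MvPolynomial.support_sub _ _ _ hd) with hd1 | hd2
    · rw [support_X] at hd1
      rw [Finset.mem_singleton] at hd1
      subst hd1
      rw [Finsupp.single_eq_of_ne' (fun h => hk (hcs.1 h.symm))] at hdz
      exact hdz rfl
    · exact hcs.2.2 k j (fun h => hk h.symm) ⟨d, support_smul hd2, hdz⟩

lemma theta_X_not {z : Fin s → Fin n} {f : Fin s → MvPolynomial (Fin n) K}
    (i : Fin n) (h : ¬ ∃ j, z j = i) : thetaMap z f (X i) = X i := by
  classical
  rw [thetaMap, AlgHom.comp_apply, psiMap, AlgHom.comp_apply, aeval_X, subMap, dif_neg h,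
    killZ_X_not z i h, rename_X]

lemma X_sub_theta_mem {z : Fin s → Fin n} {f : Fin s → MvPolynomial (Fin n) K}
    (hcs : CoherentlySeparating z f) (i : Fin n) :
    X i - thetaMap z f (X i) ∈ Ideal.span (Set.range f) := by
  classical
  by_cases h : ∃ j, z j = i
  · have h1 : thetaMap z f (X i) =
        rename Subtype.val (killZ z (tailTo (f h.choose) (z h.choose))) := by
      rw [thetaMap, AlgHom.comp_apply, psiMap, AlgHom.comp_apply, aeval_X, subMap, dif_pos h]
    rw [h1, no_occurs_killZ z _ (tail_no_Z hcs h.choose)]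
    have hzc : z h.choose = i := h.choose_spec
    rw [show (X i : MvPolynomial (Fin n) K) = X (z h.choose) from by rw [hzc], tailTo,
      sub_sub_cancel, smul_eq_C_mul]
    exact Ideal.mul_mem_left _ _ (Ideal.subset_span ⟨h.choose, rfl⟩)
  · rw [theta_X_not i h, sub_self]
    exact zero_mem _

lemma sub_theta_mem {z : Fin s → Fin n} {f : Fin s → MvPolynomial (Fin n) K}
    (hcs : CoherentlySeparating z f) (p : MvPolynomial (Fin n) K) :
    p - thetaMap z f p ∈ Ideal.span (Set.range f) := by
  induction p using MvPolynomial.induction_on with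
  | C a =>
    have : thetaMap z f (C a) = C a := by
      rw [show (C a : MvPolynomial (Fin n) K) = algebraMap K _ a from rfl, AlgHom.commutes]
    rw [this, sub_self]
    exact zero_mem _
  | add p q hp hq =>
    have : p + q - thetaMap z f (p + q) = (p - thetaMap z f p) + (q - thetaMap z f q) := by
      rw [map_add]; ring
    rw [this]
    exact add_mem hp hq
  | mul_X p i hp =>
    have key := X_sub_theta_mem (f := f) hcs i
    have hrw : p * X i - thetaMap z f (p * X i) =
        p * (X i - thetaMap z f (X i)) + thetaMap z f (X i) * (p - thetaMap z f p) := by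
      rw [map_mul]; ring
    rw [hrw]
    exact add_mem (Ideal.mul_mem_left _ _ key) (Ideal.mul_mem_left _ _ hp)

lemma reembedHom_apply (z : Fin s → Fin n) (f : Fin s → MvPolynomial (Fin n) K)
    (I : Ideal (MvPolynomial (Fin n) K)) (p : MvPolynomial (Fin n) K) :
    reembedHom z f I p = Ideal.Quotient.mk (elimIdeal z I) (psiMap z f p) := rfl

lemma reembed_surjective (z : Fin s → Fin n) (f : Fin s → MvPolynomial (Fin n) K)
    (I : Ideal (MvPolynomial (Fin n) K)) : Function.Surjective (reembedHom z f I) := by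
  intro x
  obtain ⟨q, rfl⟩ := Ideal.Quotient.mk_surjective x
  exact ⟨rename Subtype.val q, by rw [reembedHom_apply, psiMap_rename]⟩

lemma ker_reembed {z : Fin s → Fin n} {f : Fin s → MvPolynomial (Fin n) K}
    {I : Ideal (MvPolynomial (Fin n) K)} (hcs : CoherentlySeparating z f)
    (hf : ∀ i, f i ∈ I) : RingHom.ker (reembedHom z f I) = I := by
  have hspan : Ideal.span (Set.range f) ≤ I := Ideal.span_le.mpr (by rintro _ ⟨i, rfl⟩; exact hf i)
  ext p
  rw [RingHom.mem_ker, reembedHom_apply, Ideal.Quotient.eq_zero_iff_mem]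
  have hmem : psiMap z f p ∈ elimIdeal z I ↔ thetaMap z f p ∈ I := Iff.rfl
  rw [hmem]
  have hsub : p - thetaMap z f p ∈ I := hspan (sub_theta_mem hcs p)
  constructor
  · intro h
    have := add_mem hsub h
    rwa [sub_add_cancel] at this
  · intro h
    have := sub_mem h hsub
    rwa [sub_sub_cancel] at this

end AuxC


section AuxD
variable {K : Type*} [Field K] {n s : ℕ}

/-- The re-embedding as an algebra homomorphism. -/
noncomputable def reembedAlgHom (z : Fin s → Fin n) (f : Fin s → MvPolynomial (Fin n) K)
    (I : Ideal (MvPolynomial (Fin n) K)) :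
    MvPolynomial (Fin n) K →ₐ[K]
      (MvPolynomial {i : Fin n // ¬ ∃ j, z j = i} K ⧸ elimIdeal z I) :=
  (Ideal.Quotient.mkₐ K (elimIdeal z I)).comp (psiMap z f)

lemma reembedAlgHom_apply (z : Fin s → Fin n) (f : Fin s → MvPolynomial (Fin n) K)
    (I : Ideal (MvPolynomial (Fin n) K)) (p : MvPolynomial (Fin n) K) :
    reembedAlgHom z f I p = reembedHom z f I p := rfl

lemma card_compl_range (z : Fin s → Fin n) (hz : Function.Injective z) :
    Fintype.card {i : Fin n // ¬ ∃ j, z j = i} = n - s := by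
  classical
  rw [Fintype.card_subtype_compl]
  have h1 : Fintype.card {i : Fin n // ∃ j, z j = i} = Fintype.card (Set.range z) :=
    Fintype.card_congr (Equiv.subtypeEquivRight fun x => Iff.rfl)
  rw [h1, Set.card_range_of_injective hz, Fintype.card_fin, Fintype.card_fin]

lemma reembed_equiv_exists {z : Fin s → Fin n} {f : Fin s → MvPolynomial (Fin n) K}
    {I : Ideal (MvPolynomial (Fin n) K)} (hcs : CoherentlySeparating z f)
    (hf : ∀ i, f i ∈ I) :
    ∃ I' : Ideal (MvPolynomial (Fin (n - s)) K),
      Nonempty ((MvPolynomial (Fin n) K ⧸ I) ≃ₐ[K] (MvPolynomial (Fin (n - s)) K ⧸ I')) := by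
  have hker : RingHom.ker (reembedAlgHom z f I) = I := by
    ext p
    rw [RingHom.mem_ker, reembedAlgHom_apply, ← RingHom.mem_ker, ker_reembed hcs hf]
  have hsurj : Function.Surjective (reembedAlgHom z f I) := by
    intro x
    obtain ⟨p, hp⟩ := reembed_surjective z f I x
    exact ⟨p, hp⟩
  let e1 := Ideal.quotientKerAlgEquivOfSurjective hsurj
  let e0 := Ideal.quotientEquivAlgOfEq K hker.symm
  let eF : {i : Fin n // ¬ ∃ j, z j = i} ≃ Fin (n - s) := Fintype.equivFinOfCardEq
    (card_compl_range z hcs.1)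
  let e2 := Ideal.quotientEquivAlg (elimIdeal z I)
    (Ideal.map (renameEquiv K eF : MvPolynomial _ K ≃ₐ[K] MvPolynomial (Fin (n - s)) K)
      (elimIdeal z I)) (renameEquiv K eF) rfl
  exact ⟨_, ⟨((e0.trans e1).trans e2)⟩⟩

end AuxD


section AuxE
variable {K : Type*} [Field K] {n s : ℕ}

lemma taylor_sq {m : ℕ} (b : Fin m → K) (q : MvPolynomial (Fin m) K) :
    ∃ (c : K) (d : Fin m → K),
      q - (C c + ∑ j, C (d j) * (X j - C (b j))) ∈
        (Ideal.span (Set.range fun j => (X j : MvPolynomial (Fin m) K) - C (b j))) ^ 2 := by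
  classical
  set N : Ideal (MvPolynomial (Fin m) K) :=
    Ideal.span (Set.range fun j => (X j : MvPolynomial (Fin m) K) - C (b j)) with hN
  induction q using MvPolynomial.induction_on with
  | C a =>
    refine ⟨a, 0, ?_⟩
    have : (C a : MvPolynomial (Fin m) K) -
        (C a + ∑ j, C ((0 : Fin m → K) j) * (X j - C (b j))) = 0 := by
      simp
    rw [this]
    exact zero_mem _
  | add p q hp hq =>
    obtain ⟨c, d, hcd⟩ := hp
    obtain ⟨c', d', hcd'⟩ := hq
    refine ⟨c + c', d + d', ?_⟩
    have : p + q - (C (c + c') + ∑ j, C ((d + d') j) * (X j - C (b j))) =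
        (p - (C c + ∑ j, C (d j) * (X j - C (b j)))) +
        (q - (C c' + ∑ j, C (d' j) * (X j - C (b j)))) := by
      simp only [Pi.add_apply, map_add, add_mul, Finset.sum_add_distrib]
      ring
    rw [this]
    exact add_mem hcd hcd'
  | mul_X p i hp =>
    obtain ⟨c, d, hcd⟩ := hp
    refine ⟨c * b i, fun j => (if j = i then c else 0) + b i * d j, ?_⟩
    set l : MvPolynomial (Fin m) K := ∑ j, C (d j) * (X j - C (b j)) with hl
    have hlN : l ∈ N := by
      apply Submodule.sum_mem
      intro j _
      exact Ideal.mul_mem_left _ _ (Ideal.subset_span ⟨j, rfl⟩)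
    have hXN : (X i : MvPolynomial (Fin m) K) - C (b i) ∈ N := Ideal.subset_span ⟨i, rfl⟩
    have hsum : ∑ j, C ((if j = i then c else 0) + b i * d j) * (X j - C (b j))
        = C c * (X i - C (b i)) + C (b i) * l := by
      simp only [map_add, add_mul, Finset.sum_add_distrib]
      congr 1
      · have : ∀ j : Fin m, C (if j = i then c else 0) * (X j - C (b j)) =
            if j = i then C c * (X j - C (b j)) else 0 := by
          intro j
          by_cases hji : j = i <;> simp [hji]
        rw [Finset.sum_congr rfl fun j _ => this j, Finset.sum_ite_eq' Finset.univ i,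
          if_pos (Finset.mem_univ i)]
      · rw [hl, Finset.mul_sum]
        apply Finset.sum_congr rfl
        intro j _
        rw [map_mul]
        ring
    rw [hsum]
    have key : p * X i - (C (c * b i) + (C c * (X i - C (b i)) + C (b i) * l)) =
        (p - (C c + l)) * X i + l * (X i - C (b i)) := by
      rw [map_mul]
      ring
    rw [key]
    refine add_mem (Ideal.mul_mem_right _ _ hcd) ?_
    rw [pow_two]
    exact Ideal.mul_mem_mul hlN hXN


lemma finrank_le_of_span_top {V : Type*} [AddCommGroup V] [Module K V] {m : ℕ} {v : Fin m → V}
    (htop : Submodule.span K (Set.range v) = ⊤) : Module.finrank K V ≤ m := by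
  classical
  let T : (Fin m → K) →ₗ[K] V := Fintype.linearCombination K v
  have hr : LinearMap.range T = Submodule.span K (Set.range v) := by
    rw [Fintype.range_linearCombination]
  have h1 : Module.finrank K ↥(LinearMap.range T) ≤ Module.finrank K (Fin m → K) :=
    LinearMap.finrank_range_le T
  rw [hr, htop] at h1
  rw [Module.finrank_pi, Fintype.card_fin] at h1
  simpa [finrank_top] using h1

set_option maxHeartbeats 1000000 in
set_option synthInstance.maxHeartbeats 400000 in
lemma lower_bound {m : ℕ} {I : Ideal (MvPolynomial (Fin n) K)}
    (hI : I ≤ linMaxIdeal (0 : Fin n → K)) {I' : Ideal (MvPolynomial (Fin m) K)}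
    (e : (MvPolynomial (Fin n) K ⧸ I) ≃ₐ[K] (MvPolynomial (Fin m) K ⧸ I')) :
    n - Module.finrank K (linSpace (0 : Fin n → K) I) ≤ m := by
  classical
  set W : Submodule K (Fin n → K) := (linSpace (0 : Fin n → K) I).map linCoeff with hW
  have hfr : Module.finrank K ((Fin n → K) ⧸ W) =
      n - Module.finrank K (linSpace (0 : Fin n → K) I) := by
    have h1 := Submodule.finrank_quotient_add_finrank W
    rw [Module.finrank_pi, Fintype.card_fin] at h1
    have h2 : Module.finrank K W = Module.finrank K (linSpace (0 : Fin n → K) I) :=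
      finrank_map_linCoeff I
    omega
  rw [← hfr]
  -- the character χ
  have hann : ∀ a ∈ I, (aeval (0 : Fin n → K)) a = (0 : K) := by
    intro a ha
    have hc := constantCoeff_of_mem_M (hI ha)
    rw [show (0 : Fin n → K) = (fun _ => 0) from rfl, aeval_zero', hc, map_zero]
  set χ : (MvPolynomial (Fin n) K ⧸ I) →ₐ[K] K := Ideal.Quotient.liftₐ I (aeval 0) hann with hχ
  have hχmk : ∀ p, χ (Ideal.Quotient.mk I p) = (aeval (0 : Fin n → K)) p := fun p => by
    rw [hχ, Ideal.Quotient.liftₐ_apply]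
    rfl
  set ρ : MvPolynomial (Fin m) K →ₐ[K] (MvPolynomial (Fin n) K ⧸ I) :=
    (e.symm : (MvPolynomial (Fin m) K ⧸ I') ≃ₐ[K] _).toAlgHom.comp
      (Ideal.Quotient.mkₐ K I') with hρ
  set b : Fin m → K := fun j => χ (ρ (X j)) with hb
  set N : Ideal (MvPolynomial (Fin m) K) :=
    Ideal.span (Set.range fun j => (X j : MvPolynomial (Fin m) K) - C (b j)) with hN
  set Mb : Ideal (MvPolynomial (Fin n) K ⧸ I) :=
    Ideal.map (Ideal.Quotient.mk I) (linMaxIdeal (0 : Fin n → K)) with hMb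
  have hkerχ : ∀ x, χ x = 0 → x ∈ Mb := by
    intro x hx
    obtain ⟨p, rfl⟩ := Ideal.Quotient.mk_surjective x
    rw [hχmk, show (0 : Fin n → K) = (fun _ => 0) from rfl, aeval_zero'] at hx
    have hcp : constantCoeff p = 0 := by simpa using hx
    exact Ideal.mem_map_of_mem _ (mem_M_of_constantCoeff hcp)
  have hNMb : N ≤ Ideal.comap ρ Mb := by
    rw [hN, Ideal.span_le]
    rintro _ ⟨j, rfl⟩
    rw [SetLike.mem_coe, Ideal.mem_comap]
    apply hkerχ
    rw [map_sub, map_sub]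
    have h1 : χ (ρ (C (b j))) = b j := by
      rw [show (C (b j) : MvPolynomial (Fin m) K) = algebraMap K _ (b j) from rfl,
        AlgHom.commutes, AlgHom.commutes]
      rfl
    rw [h1]
    exact sub_self _
  have hsqW : ∀ h ∈ N ^ 2, ∀ p, Ideal.Quotient.mk I p = ρ h → linCoeff p ∈ W := by
    intro h hh p hp
    have h1 : ρ h ∈ Ideal.map ρ (N ^ 2) := Ideal.mem_map_of_mem ρ hh
    rw [Ideal.map_pow] at h1
    have h2 : Ideal.map ρ N ≤ Mb := Ideal.map_le_iff_le_comap.mpr hNMb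
    have h3 : ρ h ∈ Ideal.map (Ideal.Quotient.mk I) (linMaxIdeal (0 : Fin n → K) ^ 2) := by
      rw [Ideal.map_pow]
      exact Ideal.pow_right_mono h2 2 h1
    have hp' : p ∈ linMaxIdeal (0 : Fin n → K) ^ 2 ⊔ I := by
      have h4 : p ∈ Ideal.comap (Ideal.Quotient.mk I)
          (Ideal.map (Ideal.Quotient.mk I) (linMaxIdeal (0 : Fin n → K) ^ 2)) := by
        rw [Ideal.mem_comap, hp]
        exact h3
      rwa [Ideal.comap_map_of_surjective _ Ideal.Quotient.mk_surjective,
        ← RingHom.ker_eq_comap_bot, Ideal.mk_ker] at h4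
    obtain ⟨a, haM, c, hcI, hac⟩ := Submodule.mem_sup.mp hp'
    rw [← hac, map_add, linCoeff_M_sq haM, zero_add]
    exact linCoeff_mem_W hcI
  -- representatives
  have hex : ∀ x : MvPolynomial (Fin n) K ⧸ I, ∃ p, Ideal.Quotient.mk I p = x :=
    Ideal.Quotient.mk_surjective
  choose rep hrep using hex
  have hex' : ∀ x : MvPolynomial (Fin m) K ⧸ I', ∃ p, Ideal.Quotient.mkₐ K I' p = x :=
    fun x => Ideal.Quotient.mk_surjective x
  choose rep' hrep' using hex'
  set F : MvPolynomial (Fin n) K →ₗ[K] ((Fin n → K) ⧸ W) := W.mkQ ∘ₗ linCoeff with hF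
  have hFI : ∀ w ∈ I, F w = 0 := by
    intro w hw
    rw [hF, LinearMap.comp_apply, Submodule.mkQ_apply, Submodule.Quotient.mk_eq_zero]
    exact linCoeff_mem_W hw
  have hFsq : ∀ h ∈ N ^ 2, F (rep (ρ h)) = 0 := by
    intro h hh
    rw [hF, LinearMap.comp_apply, Submodule.mkQ_apply, Submodule.Quotient.mk_eq_zero]
    exact hsqW h hh _ (hrep _)
  set v : Fin m → ((Fin n → K) ⧸ W) :=
    fun j => F (rep (ρ (X j - C (b j)))) with hv
  have hXi : ∀ i : Fin n, F (X i) ∈ Submodule.span K (Set.range v) := by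
    intro i
    obtain ⟨c, d, hcd⟩ := taylor_sq b (rep' (e (Ideal.Quotient.mk I (X i))))
    set q : MvPolynomial (Fin m) K := rep' (e (Ideal.Quotient.mk I (X i))) with hq
    have hρq : ρ q = Ideal.Quotient.mk I (X i) := by
      have : Ideal.Quotient.mkₐ K I' q = e (Ideal.Quotient.mk I (X i)) := hrep' _
      rw [hρ, AlgHom.comp_apply, this]
      exact e.symm_apply_apply _
    set h0 : MvPolynomial (Fin m) K := q - (C c + ∑ j, C (d j) * (X j - C (b j))) with hh0
    have hqeq : q = C c + (∑ j, C (d j) * (X j - C (b j))) + h0 := by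
      rw [hh0]; ring
    have hmk : Ideal.Quotient.mk I (X i) =
        Ideal.Quotient.mk I (C c + (∑ j, C (d j) * rep (ρ (X j - C (b j)))) + rep (ρ h0)) := by
      have hCc : Ideal.Quotient.mk I (C c) = ρ (C c) := by
        rw [show (C c : MvPolynomial (Fin m) K) = algebraMap K _ c from rfl, AlgHom.commutes]
        rfl
      have hCd : ∀ j : Fin m, Ideal.Quotient.mk I (C (d j)) = ρ (C (d j)) := by
        intro j
        rw [show (C (d j) : MvPolynomial (Fin m) K) = algebraMap K _ (d j) from rfl,
          AlgHom.commutes]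
        rfl
      rw [map_add, map_add, map_sum, hCc]
      have hsum : ∀ j : Fin m, Ideal.Quotient.mk I (C (d j) * rep (ρ (X j - C (b j)))) =
          ρ (C (d j) * (X j - C (b j))) := by
        intro j
        rw [map_mul, map_mul, hrep, hCd]
      rw [Finset.sum_congr rfl fun j _ => hsum j, hrep, ← map_sum, ← map_add, ← map_add,
        ← hqeq, hρq]
    have hdiff : X i -
        (C c + (∑ j, C (d j) * rep (ρ (X j - C (b j)))) + rep (ρ h0)) ∈ I :=
      Ideal.Quotient.eq.mp hmk
    have hXieq : (X i : MvPolynomial (Fin n) K) =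
        (X i - (C c + (∑ j, C (d j) * rep (ρ (X j - C (b j)))) + rep (ρ h0))) +
        (C c + (∑ j, C (d j) * rep (ρ (X j - C (b j)))) + rep (ρ h0)) := by
      ring
    have hFX : F (X i) = ∑ j, d j • v j := by
      rw [hXieq, map_add, hFI _ hdiff, zero_add, map_add, map_add, map_sum]
      have hFC : F (C c) = 0 := by
        rw [hF, LinearMap.comp_apply, linCoeff_C, map_zero]
      rw [hFC, hFsq h0 (hh0 ▸ hcd), zero_add, add_zero]
      apply Finset.sum_congr rfl
      intro j _
      rw [← smul_eq_C_mul, map_smul, hv]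
    rw [hFX]
    exact Submodule.sum_mem _ fun j _ =>
      Submodule.smul_mem _ _ (Submodule.subset_span ⟨j, rfl⟩)
  have htop : Submodule.span K (Set.range v) = ⊤ := by
    rw [eq_top_iff]
    intro x _
    obtain ⟨u, rfl⟩ := W.mkQ_surjective x
    have hu : u ∈ Submodule.span K (Set.range fun i : Fin n => (Pi.single i 1 : Fin n → K)) := by
      have hbs := (Pi.basisFun K (Fin n)).span_eq
      have hrg : Set.range (⇑(Pi.basisFun K (Fin n))) =
          Set.range fun i : Fin n => (Pi.single i 1 : Fin n → K) :=
        congrArg Set.range (funext fun i => Pi.basisFun_apply K (Fin n) i)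
      rw [hrg] at hbs
      rw [hbs]
      trivial
    have hmem : W.mkQ u ∈ Submodule.map W.mkQ
        (Submodule.span K (Set.range fun i : Fin n => (Pi.single i 1 : Fin n → K))) :=
      Submodule.mem_map_of_mem hu
    rw [Submodule.map_span] at hmem
    refine Submodule.span_le.mpr ?_ hmem
    rintro _ ⟨_, ⟨i, rfl⟩, rfl⟩
    have : W.mkQ (Pi.single i 1) = F (X i) := by
      rw [hF, LinearMap.comp_apply, linCoeff_X]
    rw [this]
    exact hXi i
  exact finrank_le_of_span_top htop

end AuxE

/-- If `I ⊆ M = ⟨x_1,...,x_n⟩` contains a coherently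
`Z`-separating tuple `(f_1,...,f_s)` with `s = dim_K Lin_M(I)`, then
`edim(P/I) = n - s` and the `Z`-separating re-embedding
`Φ : P/I → P̂/(I ∩ P̂)` is an optimal re-embedding. -/
theorem statement16 (z : Fin s → Fin n) (f : Fin s → MvPolynomial (Fin n) K)
    (I : Ideal (MvPolynomial (Fin n) K)) (hI : I ≤ linMaxIdeal (0 : Fin n → K))
    (hfI : ∀ i, f i ∈ I ∧ f i ≠ 0)
    (hcs : CoherentlySeparating z f)
    (hs : s = Module.finrank K ↥(linSpace (0 : Fin n → K) I)) :
    edim K (MvPolynomial (Fin n) K ⧸ I) = n - s ∧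
    RingHom.ker (reembedHom z f I) = I ∧
    Function.Surjective (reembedHom z f I) := by
  have hf : ∀ i, f i ∈ I := fun i => (hfI i).1
  refine ⟨?_, ker_reembed hcs hf, reembed_surjective z f I⟩
  obtain ⟨I'', ⟨eq⟩⟩ := reembed_equiv_exists hcs hf
  have hmem : (n - s) ∈ {m | ∃ I' : Ideal (MvPolynomial (Fin m) K),
      Nonempty ((MvPolynomial (Fin n) K ⧸ I) ≃ₐ[K] (MvPolynomial (Fin m) K ⧸ I'))} :=
    ⟨I'', ⟨eq⟩⟩
  rw [edim]
  apply le_antisymm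
  · exact Nat.sInf_le hmem
  · apply le_csInf ⟨_, hmem⟩
    rintro m ⟨I', ⟨e⟩⟩
    have hlb := lower_bound hI e
    rwa [← hs] at hlb
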